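/- Let k ≥ 1 and let z be a complex number with z ≠ 0 avoiding all poles of the relevant series. Then the variant bilateral series 𝓖_{2k}(z) := Σ_{j∈ℤ} (F_j - F_{j-1} z)^{-2k} satisfies both 𝓖_{2k}(-1/z) = z^{2k} 𝓖_{2k}(z) and 𝓖_{2k}(1-z) = 𝓖_{2k}(z) on its domain. -/

import Mathlib

private lemma fib_neg_key (F : ℤ → ℤ) (h0 : F 0 = 0) (h1 : F 1 = 1)
    (hrec : ∀ n : ℤ, F n = F (n - 1) + F (n - 2)) :
    ∀ j : ℤ, ∃ ε : ℤ, ε ^ 2 = 1 ∧ F (1 - j) = ε * F (j - 1) ∧ F (-j) = -(ε * F j) := by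
  have Fc : ∀ a b : ℤ, a = b → F a = F b := fun a b h => by rw [h]
  intro j
  induction j using Int.induction_on with
  | zero =>
    refine ⟨1, by ring, ?_, ?_⟩
    · have hm1 : F (-1) = 1 := by
        have h := hrec 1
        rw [Fc (1-1:ℤ) 0 (by ring), Fc (1-2:ℤ) (-1) (by ring)] at h
        omega
      simp [h1, hm1]
    · simp [h0]
  | succ i ih =>
    obtain ⟨ε, hε, hA, hB⟩ := ih
    refine ⟨-ε, by rw [neg_pow]; simp [hε], ?_, ?_⟩
    · rw [Fc (1 - ((i:ℤ)+1)) (-(i:ℤ)) (by ring), Fc (((i:ℤ)+1)-1) (i:ℤ) (by ring), hB]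
      ring
    · have hr1 := hrec (1 - (i:ℤ))
      rw [Fc (1 - (i:ℤ) - 1) (-(i:ℤ)) (by ring),
          Fc (1 - (i:ℤ) - 2) (-((i:ℤ)+1)) (by ring)] at hr1
      have hr2 := hrec ((i:ℤ)+1)
      rw [Fc (((i:ℤ)+1)-1) (i:ℤ) (by ring), Fc (((i:ℤ)+1)-2) ((i:ℤ)-1) (by ring)] at hr2
      linear_combination -hr1 + hA - hB - ε * hr2
  | pred i ih =>
    obtain ⟨ε, hε, hA, hB⟩ := ih
    refine ⟨-ε, by rw [neg_pow]; simp [hε], ?_, ?_⟩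
    · have hr1 := hrec (-(i:ℤ))
      have hr2 := hrec ((i:ℤ)+2)
      rw [Fc (((i:ℤ)+2)-1) ((i:ℤ)+1) (by ring), Fc (((i:ℤ)+2)-2) (i:ℤ) (by ring)] at hr2
      rw [Fc (1 - (-(i:ℤ)-1)) ((i:ℤ)+2) (by ring), Fc (-(i:ℤ)-1-1) (-(i:ℤ)-2) (by ring)]
      rw [Fc (1 - -(i:ℤ)) ((i:ℤ)+1) (by ring)] at hA
      rw [Fc (- -(i:ℤ)) (i:ℤ) (by ring)] at hB
      linear_combination hr2 + hA + hB - ε * hr1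
    · rw [Fc (-(-(i:ℤ)-1)) ((i:ℤ)+1) (by ring)]
      rw [Fc (1 - -(i:ℤ)) ((i:ℤ)+1) (by ring)] at hA
      linear_combination hA


/-- For `k ≥ 1` and `z ≠ 0` such that `z`, `-1/z` and `1 - z` all avoid the ratios
`F_n/F_{n-1}` (`n ∈ ℤ`), `φ` and `-1/φ`, the variant bilateral series
`𝓖_{2k}(z) = Σ_{j∈ℤ} (F_j - F_{j-1} z)^{-2k}` satisfies both
`𝓖_{2k}(-1/z) = z^{2k} 𝓖_{2k}(z)` and `𝓖_{2k}(1-z) = 𝓖_{2k}(z)`. -/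
theorem fib_variant_semimodular (F : ℤ → ℤ) (h0 : F 0 = 0) (h1 : F 1 = 1)
    (hrec : ∀ n : ℤ, F n = F (n - 1) + F (n - 2))
    (k : ℕ) (hk : 1 ≤ k) (z : ℂ) (hz0 : z ≠ 0)
    (hpole : ∀ n : ℤ, z ≠ (F n : ℂ) / (F (n - 1) : ℂ))
    (hpole' : ∀ n : ℤ, -1 / z ≠ (F n : ℂ) / (F (n - 1) : ℂ))
    (hpole'' : ∀ n : ℤ, 1 - z ≠ (F n : ℂ) / (F (n - 1) : ℂ))
    (hphi : z ≠ (((1 + Real.sqrt 5) / 2 : ℝ) : ℂ) ∧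
      z ≠ -1 / (((1 + Real.sqrt 5) / 2 : ℝ) : ℂ))
    (hphi' : -1 / z ≠ (((1 + Real.sqrt 5) / 2 : ℝ) : ℂ) ∧
      -1 / z ≠ -1 / (((1 + Real.sqrt 5) / 2 : ℝ) : ℂ))
    (hphi'' : 1 - z ≠ (((1 + Real.sqrt 5) / 2 : ℝ) : ℂ) ∧
      1 - z ≠ -1 / (((1 + Real.sqrt 5) / 2 : ℝ) : ℂ)) :
    (∑' j : ℤ, (((F j : ℂ) - (F (j - 1) : ℂ) * (-1 / z)) ^ (2 * k))⁻¹ =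
        z ^ (2 * k) * ∑' j : ℤ, (((F j : ℂ) - (F (j - 1) : ℂ) * z) ^ (2 * k))⁻¹) ∧
      ∑' j : ℤ, (((F j : ℂ) - (F (j - 1) : ℂ) * (1 - z)) ^ (2 * k))⁻¹ =
        ∑' j : ℤ, (((F j : ℂ) - (F (j - 1) : ℂ) * z) ^ (2 * k))⁻¹ := by
  set g : ℤ → ℂ := fun j => (((F j : ℂ) - (F (j - 1) : ℂ) * z) ^ (2 * k))⁻¹ with hg
  -- key pointwise identity
  have hgkey : ∀ j : ℤ, (((F (j - 1) : ℂ) + (F j : ℂ) * z) ^ (2 * k))⁻¹ = g (1 - j) := by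
    intro j
    obtain ⟨ε, hε, hA, hB⟩ := fib_neg_key F h0 h1 hrec j
    have hεC : ((ε : ℂ)) ^ 2 = 1 := by exact_mod_cast congrArg (fun n : ℤ => (n : ℂ)) hε
    have e : (1 - j - 1 : ℤ) = -j := by ring
    have hval : (F (1 - j) : ℂ) - (F (1 - j - 1) : ℂ) * z
        = (ε : ℂ) * ((F (j - 1) : ℂ) + (F j : ℂ) * z) := by
      rw [e, hA, hB]; push_cast; ring
    simp only [hg]
    rw [hval, mul_pow, pow_mul (ε : ℂ), hεC, one_pow, one_mul]
  constructor
  · have hpt : ∀ j : ℤ, (((F j : ℂ) - (F (j - 1) : ℂ) * (-1 / z)) ^ (2 * k))⁻¹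
        = z ^ (2 * k) * g (1 - j) := by
      intro j
      rw [← hgkey j]
      have hv : (F j : ℂ) - (F (j - 1) : ℂ) * (-1 / z)
          = ((F (j - 1) : ℂ) + (F j : ℂ) * z) / z := by
        field_simp
        ring
      rw [hv, div_pow, inv_div, div_eq_mul_inv]
    calc ∑' j : ℤ, (((F j : ℂ) - (F (j - 1) : ℂ) * (-1 / z)) ^ (2 * k))⁻¹
        = ∑' j : ℤ, z ^ (2 * k) * g (1 - j) := tsum_congr hpt
      _ = z ^ (2 * k) * ∑' j : ℤ, g (1 - j) := tsum_mul_left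
      _ = z ^ (2 * k) * ∑' j : ℤ, g j := by
          congr 1
          exact (Equiv.subLeft (1 : ℤ)).tsum_eq g
  · have hpt : ∀ j : ℤ, (((F j : ℂ) - (F (j - 1) : ℂ) * (1 - z)) ^ (2 * k))⁻¹
        = g (2 - j) := by
      intro j
      have h2 := hgkey (j - 1)
      have e1 : (j - 1 - 1 : ℤ) = j - 2 := by ring
      have e2 : (1 - (j - 1) : ℤ) = 2 - j := by ring
      rw [e1, e2] at h2
      rw [← h2]
      congr 1
      have hr := hrec j
      have : (F j : ℂ) = (F (j - 1) : ℂ) + (F (j - 2) : ℂ) := by exact_mod_cast hr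
      rw [this]; ring
    calc ∑' j : ℤ, (((F j : ℂ) - (F (j - 1) : ℂ) * (1 - z)) ^ (2 * k))⁻¹
        = ∑' j : ℤ, g (2 - j) := tsum_congr hpt
      _ = ∑' j : ℤ, g j := (Equiv.subLeft (2 : ℤ)).tsum_eq g
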